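/- Let k, l, r be positive integers with l ≥ k, let α > 0 satisfy Σ_{i=k+1}^{k+l} α^{i/k} = Σ_{i=1}^{k} α^{i/k}, and let G = ℝ^r ⋊ ℚ with multiplication (x, u)(y, v) = (x + α^u y, u + v) (scalar multiplication acting diagonally on ℝ^r). For i = 0, 1, …, r let e_i ∈ G have last component 1/k, i-th component α^{1/k} if i ≥ 1, and all other components 0. Then e_i^k e_j^l = e_j^k e_i^l for all i, j ∈ {0, 1, …, r}. -/

import Mathlib

/-- Multiplication of the semidirect product `ℝ^r ⋊ ℚ` under the diagonal
action `u ↦ (x ↦ α^u • x)`. -/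
noncomputable def sdMulV (r : ℕ) (α : ℝ) (p q : (Fin r → ℝ) × ℚ) :
    (Fin r → ℝ) × ℚ :=
  (p.1 + α ^ ((p.2 : ℝ)) • q.1, p.2 + q.2)

/-- `j`-th power with respect to `sdMulV` (the identity is `(0, 0)`). -/
noncomputable def sdPowV (r : ℕ) (α : ℝ) (p : (Fin r → ℝ) × ℚ) :
    ℕ → (Fin r → ℝ) × ℚ
  | 0 => (0, 0)
  | j + 1 => sdMulV r α (sdPowV r α p j) p

/-- The generator `e_i` : last component `1/k`, `i`-th component `α^(1/k)`
for `1 ≤ i ≤ r`, all other components `0` (`e 0` has vector part `0`). -/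
noncomputable def genE (r k : ℕ) (α : ℝ) (i : ℕ) : (Fin r → ℝ) × ℚ :=
  (fun j : Fin r => if (j : ℕ) + 1 = i then α ^ (1 / (k : ℝ)) else 0,
    1 / (k : ℚ))

lemma sdPow_genE (r k : ℕ) (α : ℝ) (i : ℕ) (n : ℕ) :
    sdPowV r α (genE r k α i) n
      = ((∑ m ∈ Finset.range n, α ^ ((m : ℝ) / (k : ℝ))) • (genE r k α i).1,
          (n : ℚ) / k) := by
  induction n with
  | zero => simp [sdPowV]
  | succ n ih =>
    rw [sdPowV, ih, sdMulV]
    refine Prod.ext ?_ ?_ <;> dsimp only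
    · simp only [Finset.sum_range_succ, add_smul]
      congr 2
      push_cast
      ring_nf
    · show (n : ℚ) / k + (genE r k α i).2 = _
      simp only [genE]
      push_cast
      rw [← add_div]

lemma key_rel (k l : ℕ) (hk : 0 < k) (α : ℝ) (hα : 0 < α)
    (hroot : ∑ i ∈ Finset.Icc (k + 1) (k + l), α ^ ((i : ℝ) / (k : ℝ))
              = ∑ i ∈ Finset.Icc 1 k, α ^ ((i : ℝ) / (k : ℝ))) :
    ∑ m ∈ Finset.range k, α ^ ((m : ℝ) / (k : ℝ))
      = α * ∑ m ∈ Finset.range l, α ^ ((m : ℝ) / (k : ℝ)) := by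
  have hk' : (k : ℝ) ≠ 0 := Nat.cast_ne_zero.mpr hk.ne'
  rw [← Finset.Ico_add_one_right_eq_Icc, ← Finset.Ico_add_one_right_eq_Icc, Finset.sum_Ico_eq_sum_range,
    Finset.sum_Ico_eq_sum_range] at hroot
  simp only [show k + l + 1 - (k + 1) = l by omega, show k + 1 - 1 = k by omega] at hroot
  have hpos : (0 : ℝ) < α ^ (1 / (k : ℝ)) := Real.rpow_pos_of_pos hα _
  have lhs : ∀ m : ℕ, α ^ (((k + 1 + m : ℕ) : ℝ) / (k : ℝ))
      = α ^ (1 / (k : ℝ)) * (α * α ^ ((m : ℝ) / (k : ℝ))) := by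
    intro m
    have h : ((k + 1 + m : ℕ) : ℝ) / (k : ℝ) = 1 / k + (1 + (m : ℝ) / k) := by
      push_cast; field_simp; ring
    rw [h, Real.rpow_add hα, Real.rpow_add hα, Real.rpow_one]
  have rhs : ∀ m : ℕ, α ^ (((1 + m : ℕ) : ℝ) / (k : ℝ))
      = α ^ (1 / (k : ℝ)) * α ^ ((m : ℝ) / (k : ℝ)) := by
    intro m
    have h : ((1 + m : ℕ) : ℝ) / (k : ℝ) = 1 / k + (m : ℝ) / k := by
      push_cast; rw [add_div]
    rw [h, Real.rpow_add hα]
  simp only [lhs, rhs, ← Finset.mul_sum] at hroot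
  have := mul_left_cancel₀ hpos.ne' hroot
  rw [← this, Finset.mul_sum]

theorem generators_relations_rank_r
    (k l r : ℕ) (hk : 0 < k) (hl : k ≤ l) (hr : 0 < r) (α : ℝ) (hα : 0 < α)
    (hroot : ∑ i ∈ Finset.Icc (k + 1) (k + l), α ^ ((i : ℝ) / (k : ℝ))
              = ∑ i ∈ Finset.Icc 1 k, α ^ ((i : ℝ) / (k : ℝ))) :
    ∀ i ≤ r, ∀ j ≤ r,
      sdMulV r α (sdPowV r α (genE r k α i) k) (sdPowV r α (genE r k α j) l)
        = sdMulV r α (sdPowV r α (genE r k α j) k)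
            (sdPowV r α (genE r k α i) l) := by
  intro i _ j _
  have hk' : (k : ℝ) ≠ 0 := Nat.cast_ne_zero.mpr hk.ne'
  set Sk := ∑ m ∈ Finset.range k, α ^ ((m : ℝ) / (k : ℝ)) with hSk
  set Sl := ∑ m ∈ Finset.range l, α ^ ((m : ℝ) / (k : ℝ)) with hSl
  have hkey : Sk = α * Sl := key_rel k l hk α hα hroot
  have hexp : α ^ (((k : ℚ) / (k : ℚ) : ℚ) : ℝ) = α := by
    have : (((k : ℚ) / (k : ℚ) : ℚ) : ℝ) = 1 := by push_cast; field_simp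
    rw [this, Real.rpow_one]
  rw [sdPow_genE, sdPow_genE, sdPow_genE, sdPow_genE, sdMulV, sdMulV]
  refine Prod.ext ?_ rfl
  show Sk • (genE r k α i).1 + α ^ (((k : ℚ) / (k : ℚ) : ℚ) : ℝ) • Sl • (genE r k α j).1
      = Sk • (genE r k α j).1 + α ^ (((k : ℚ) / (k : ℚ) : ℚ) : ℝ) • Sl • (genE r k α i).1
  rw [hexp, smul_smul, smul_smul, ← hkey, add_comm]
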